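/- Let $b\ge2$ and $\theta\in(0,1)$, and let $\{a_k(n)\}_{n\in\mathbb Z}$, $k\ge0$, be families of strictly positive reals with $a_k\in\ell^1(\mathbb Z)$ satisfying the recursion $a_{k+1}(n)=\theta^{n^2}\sum_{\ell_1+\dots+\ell_b=n}\prod_{i=1}^b a_k(\ell_i)$. Then for all $k\ge0$ and all $n\ge0$, $\frac{a_{k+1}(n+1)}{a_{k+1}(n)}\le b\,\theta^{(n+1)^2-n^2}\sup_{\ell\ge0}\frac{a_k(\ell+1)}{a_k(\ell)}$. -/
import Mathlib

open Finset Function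

lemma stmt0_key (b : ℕ) (hb : 2 ≤ b) (ak : ℤ → ℝ) (hpos : ∀ n, 0 < ak n)
    (hsum : ∀ n : ℤ, Summable (fun l : {l : Fin b → ℤ // ∑ i, l i = n} => ∏ i, ak (l.1 i)))
    (Ck : ℝ) (hC : IsLUB (Set.range fun ℓ : ℕ => ak (ℓ + 1) / ak ℓ) Ck) (n : ℕ) :
    (∑' l : {l : Fin b → ℤ // ∑ i, l i = (n : ℤ) + 1}, ∏ i, ak (l.1 i)) ≤
      b * Ck * ∑' l : {l : Fin b → ℤ // ∑ i, l i = (n : ℤ)}, ∏ i, ak (l.1 i) := by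
  have hCpos : 0 < Ck := lt_of_lt_of_le (div_pos (hpos 1) (hpos 0))
    (hC.1 ⟨0, by norm_num⟩)
  have hex : ∀ l : {l : Fin b → ℤ // ∑ i, l i = (n : ℤ) + 1}, ∃ i, 1 ≤ l.1 i := by
    intro l
    by_contra h
    push_neg at h
    have : (∑ i, l.1 i) ≤ 0 := Finset.sum_nonpos fun i _ => by have := h i; omega
    rw [l.2] at this; omega
  have hupd : ∀ (l : Fin b → ℤ) (i : Fin b),
      ∑ j, Function.update l i (l i - 1) j = (∑ j, l j) - 1 := by
    intro l i
    rw [Finset.sum_update_of_mem (Finset.mem_univ i)]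
    have h2 := Finset.sum_eq_sum_sdiff_singleton_add (Finset.mem_univ i) l
    linarith
  set idx : {l : Fin b → ℤ // ∑ i, l i = (n : ℤ) + 1} → Fin b := fun l => (hex l).choose
  have hidx : ∀ l : {l : Fin b → ℤ // ∑ i, l i = (n : ℤ) + 1}, 1 ≤ l.1 (idx l) := fun l => (hex l).choose_spec
  set emap : {l : Fin b → ℤ // ∑ i, l i = (n : ℤ) + 1} →
      Fin b × {l : Fin b → ℤ // ∑ i, l i = (n : ℤ)} :=
    fun l => (idx l, ⟨Function.update l.1 (idx l) (l.1 (idx l) - 1),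
      by rw [hupd, l.2]; ring⟩) with hemap
  have hinj : Function.Injective emap := by
    intro l₁ l₂ h
    rw [hemap] at h
    simp only [Prod.mk.injEq, Subtype.mk.injEq] at h
    obtain ⟨h1, h2⟩ := h
    rw [← h1] at h2
    apply Subtype.ext
    funext j
    have e1 := congrFun h2 j
    by_cases hj : j = idx l₁
    · subst hj
      rw [Function.update_self, Function.update_self] at e1
      omega
    · rw [Function.update_of_ne hj, Function.update_of_ne hj] at e1
      exact e1
  set g : Fin b × {l : Fin b → ℤ // ∑ i, l i = (n : ℤ)} → ℝ :=
    fun p => Ck * ∏ i, ak (p.2.1 i) with hg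
  have hgsum : Summable g := by
    rw [hg, summable_prod_of_nonneg (fun p => mul_nonneg hCpos.le (Finset.prod_nonneg fun j _ => (hpos _).le))]
    exact ⟨fun x => (hsum (n : ℤ)).mul_left Ck, Summable.of_finite⟩
  have hbound : ∀ l, (∏ i, ak (l.1 i)) ≤ g (emap l) := by
    intro l
    set i := idx l with hi
    have h1 : 1 ≤ l.1 i := hidx l
    set t : ℕ := (l.1 i - 1).toNat with ht
    have htc : (t : ℤ) = l.1 i - 1 := Int.toNat_of_nonneg (by omega)
    have hrat : ak ((t : ℤ) + 1) / ak (t : ℤ) ≤ Ck := hC.1 ⟨t, rfl⟩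
    have hstep : ak (l.1 i) ≤ Ck * ak (l.1 i - 1) := by
      rw [div_le_iff₀ (hpos _)] at hrat
      have : ((t : ℤ) + 1) = l.1 i := by omega
      rw [this, htc] at hrat
      exact hrat
    have hgval : g (emap l) = Ck * ∏ j, ak (Function.update l.1 i (l.1 i - 1) j) := rfl
    rw [hgval, Finset.prod_eq_prod_diff_singleton_mul (Finset.mem_univ i),
      Finset.prod_eq_prod_diff_singleton_mul (Finset.mem_univ i)
        (fun j => ak (Function.update l.1 i (l.1 i - 1) j))]
    have hsame : ∀ j ∈ Finset.univ \ {i},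
        ak (Function.update l.1 i (l.1 i - 1) j) = ak (l.1 j) := by
      intro j hj
      rw [Function.update_of_ne (by simpa using (Finset.mem_sdiff.mp hj).2)]
    rw [Finset.prod_congr rfl hsame, Function.update_self]
    have hprodpos : (0:ℝ) ≤ ∏ j ∈ Finset.univ \ {i}, ak (l.1 j) :=
      Finset.prod_nonneg fun j _ => (hpos _).le
    calc (∏ j ∈ Finset.univ \ {i}, ak (l.1 j)) * ak (l.1 i)
        ≤ (∏ j ∈ Finset.univ \ {i}, ak (l.1 j)) * (Ck * ak (l.1 i - 1)) := by
          exact mul_le_mul_of_nonneg_left hstep hprodpos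
      _ = Ck * ((∏ j ∈ Finset.univ \ {i}, ak (l.1 j)) * ak (l.1 i - 1)) := by ring
  have hmain := Summable.tsum_le_tsum_of_inj emap hinj
    (fun c _ => mul_nonneg hCpos.le (Finset.prod_nonneg fun j _ => (hpos _).le)) hbound (hsum ((n : ℤ) + 1)) hgsum
  refine hmain.trans_eq ?_
  rw [Summable.tsum_prod' hgsum (fun x => (hsum (n : ℤ)).mul_left Ck)]
  simp only [hg]
  rw [tsum_fintype]
  rw [Finset.sum_const, Finset.card_univ, Fintype.card_fin, nsmul_eq_mul, tsum_mul_left]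
  ring

/-- One-step ratio bound for the Fourier-coefficient recursion of the
hierarchical DG-model: if `a (k+1) n = θ^(n²) * ∑_{ℓ₁+⋯+ℓ_b = n} ∏ᵢ a k ℓᵢ` with all
coefficients positive and summable, then
`a (k+1) (n+1) / a (k+1) n ≤ b * θ^((n+1)² - n²) * sup_{ℓ ≥ 0} a k (ℓ+1) / a k ℓ`. -/
theorem stmt0 (b : ℕ) (hb : 2 ≤ b) (θ : ℝ) (hθ0 : 0 < θ) (hθ1 : θ < 1)
    (a : ℕ → ℤ → ℝ) (hpos : ∀ k n, 0 < a k n) (hl1 : ∀ k, Summable (a k))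
    (hsum : ∀ (k : ℕ) (n : ℤ),
      Summable (fun l : {l : Fin b → ℤ // ∑ i, l i = n} => ∏ i, a k (l.1 i)))
    (hrec : ∀ (k : ℕ) (n : ℤ),
      a (k + 1) n = θ ^ ((n ^ 2).toNat) *
        ∑' l : {l : Fin b → ℤ // ∑ i, l i = n}, ∏ i, a k (l.1 i))
    (C : ℕ → ℝ) (hC : ∀ k, IsLUB (Set.range fun ℓ : ℕ => a k (ℓ + 1) / a k ℓ) (C k)) :
    ∀ (k n : ℕ),
      a (k + 1) ((n : ℤ) + 1) / a (k + 1) (n : ℤ) ≤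
        (b : ℝ) * θ ^ ((n + 1) ^ 2 - n ^ 2) * C k := by
  intro k n
  have hCpos : 0 < C k :=
    lt_of_lt_of_le (div_pos (hpos k 1) (hpos k 0)) ((hC k).1 ⟨0, by norm_num⟩)
  have hkey := stmt0_key b hb (a k) (hpos k) (hsum k) (C k) (hC k) n
  have hden : 0 < a (k + 1) (n : ℤ) := hpos _ _
  rw [div_le_iff₀ hden]
  have e1 : ((((n : ℤ) + 1) ^ 2).toNat) = (n + 1) ^ 2 := by
    rw [show ((n : ℤ) + 1) ^ 2 = (((n + 1) ^ 2 : ℕ) : ℤ) by push_cast; ring,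
      Int.toNat_natCast]
  have e2 : (((n : ℤ)) ^ 2).toNat = n ^ 2 := by
    rw [show ((n : ℤ)) ^ 2 = ((n ^ 2 : ℕ) : ℤ) by push_cast; ring, Int.toNat_natCast]
  have e3 : (n + 1) ^ 2 - n ^ 2 = 2 * n + 1 := by
    have : (n + 1) ^ 2 = n ^ 2 + (2 * n + 1) := by ring
    omega
  rw [hrec k ((n : ℤ) + 1), hrec k (n : ℤ), e1, e2, e3]
  calc θ ^ ((n + 1) ^ 2) *
        (∑' l : {l : Fin b → ℤ // ∑ i, l i = (n : ℤ) + 1}, ∏ i, a k (l.1 i))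
      ≤ θ ^ ((n + 1) ^ 2) *
        ((b : ℝ) * C k * ∑' l : {l : Fin b → ℤ // ∑ i, l i = (n : ℤ)}, ∏ i, a k (l.1 i)) :=
        mul_le_mul_of_nonneg_left hkey (by positivity)
    _ = (b : ℝ) * θ ^ (2 * n + 1) * C k *
        (θ ^ (n ^ 2) * ∑' l : {l : Fin b → ℤ // ∑ i, l i = (n : ℤ)}, ∏ i, a k (l.1 i)) := by
        rw [show (n + 1) ^ 2 = n ^ 2 + (2 * n + 1) by ring, pow_add]; ring
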